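/- Let X ⊆ ℝⁿ be compact, U ⊆ ℝᵐ be nonempty compact, h : ℝⁿ → ℝ be continuous, ψ : ℝⁿ × ℝᵐ → ℝ be continuous, and C = {x ∈ X | h(x) ≥ 0}. Let (Ω, F, P) be a probability space, δ ∈ (0,1], and for each (x,u) ∈ X × U let D_{x,u} : Ω → ℝ be a random variable (the uncertain true Lie derivative ḣ(x,u)) satisfying P({ω | D_{x,u}(ω) ≥ ψ(x,u)}) ≥ 1 - δ. Suppose that for every x ∈ X with h(x) = 0 there exists u ∈ U with ψ(x,u) ≥ 0. Then there exists a class-K_e function γ̂ : ℝ → ℝ such that for every x ∈ C there exists u ∈ U with P({ω | D_{x,u}(ω) ≥ - γ̂(h(x))}) ≥ 1 - δ. -/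

import Mathlib

open Set MeasureTheory ProbabilityTheory

/-- Suppose the true (uncertain) Lie derivative `D x u : Ω → ℝ` exceeds the
calibrated lower bound `ψ(x,u)` with probability at least `1 - δ` at every `(x,u) ∈ X × U`,
and at every boundary state (`x ∈ X`, `h x = 0`) some `u ∈ U` gives `ψ(x,u) ≥ 0`. Then there
is a class-K_e function `γ̂` such that for every `x` in the safe set `C = {x ∈ X | h x ≥ 0}`
there exists `u ∈ U` with `P(D x u ≥ -γ̂(h x)) ≥ 1 - δ`. -/
theorem stmt_7 {n m : ℕ}
    (X : Set (EuclideanSpace ℝ (Fin n))) (U : Set (EuclideanSpace ℝ (Fin m)))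
    (hX : IsCompact X) (hU : IsCompact U) (hUne : U.Nonempty)
    (h : EuclideanSpace ℝ (Fin n) → ℝ) (hh : Continuous h)
    (ψ : EuclideanSpace ℝ (Fin n) × EuclideanSpace ℝ (Fin m) → ℝ) (hψ : Continuous ψ)
    {Ω : Type*} [MeasureSpace Ω] [IsProbabilityMeasure (ℙ : Measure Ω)]
    (δ : ℝ) (hδ : δ ∈ Ioc (0 : ℝ) 1)
    (D : EuclideanSpace ℝ (Fin n) → EuclideanSpace ℝ (Fin m) → Ω → ℝ)
    (hcal : ∀ x ∈ X, ∀ u ∈ U,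
      ENNReal.ofReal (1 - δ) ≤ ℙ {ω | ψ (x, u) ≤ D x u ω})
    (hbd : ∀ x ∈ X, h x = 0 → ∃ u ∈ U, 0 ≤ ψ (x, u)) :
    ∃ γhat : ℝ → ℝ, (Continuous γhat ∧ StrictMono γhat ∧ γhat 0 = 0) ∧
      ∀ x ∈ X, 0 ≤ h x → ∃ u ∈ U,
        ENNReal.ofReal (1 - δ) ≤ ℙ {ω | -γhat (h x) ≤ D x u ω} := by
  classical
  -- continuity helpers
  have hcontx : ∀ x : EuclideanSpace ℝ (Fin n), Continuous fun u => -ψ (x, u) := fun x =>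
    (hψ.comp (Continuous.prodMk_right x)).neg
  have hcontu : ∀ u : EuclideanSpace ℝ (Fin m), Continuous fun x => ψ (x, u) := fun u =>
    hψ.comp (continuous_id.prodMk continuous_const)
  -- M x = min over u ∈ U of -ψ (x,u)
  set M : EuclideanSpace ℝ (Fin n) → ℝ := fun x => sInf ((fun u => -ψ (x, u)) '' U) with hMdef
  have hMattain : ∀ x, ∃ u ∈ U, M x = -ψ (x, u) ∧ ∀ v ∈ U, M x ≤ -ψ (x, v) := by
    intro x
    obtain ⟨u, hu, hmin⟩ := hU.exists_isMinOn hUne (hcontx x).continuousOn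
    have hleast : IsLeast ((fun u => -ψ (x, u)) '' U) (-ψ (x, u)) := by
      refine ⟨mem_image_of_mem _ hu, ?_⟩
      rintro y ⟨v, hv, rfl⟩
      exact hmin hv
    have hMx : M x = -ψ (x, u) := hleast.csInf_eq
    refine ⟨u, hu, hMx, ?_⟩
    intro v hv
    rw [hMx]
    exact hmin hv
  -- global bound on M over X
  obtain ⟨b, hb⟩ : BddAbove ((fun p => -ψ p) '' (X ×ˢ U)) :=
    ((hX.prod hU).image hψ.neg).bddAbove
  set Cb : ℝ := max b 0 with hCbdef
  have hCb0 : (0 : ℝ) ≤ Cb := le_max_right _ _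
  have hMle : ∀ x ∈ X, M x ≤ Cb := by
    intro x hx
    obtain ⟨u, hu, hMx, -⟩ := hMattain x
    have : -ψ (x, u) ≤ b := hb (mem_image_of_mem _ (mk_mem_prod hx hu))
    rw [hMx]
    exact this.trans (le_max_left _ _)
  -- the nondecreasing "worst case" envelope
  set φ : ℝ → ℝ := fun r => sSup (insert 0 (M '' {x | x ∈ X ∧ 0 ≤ h x ∧ h x ≤ r})) with hφdef
  have hSle : ∀ r : ℝ, ∀ y ∈ insert 0 (M '' {x | x ∈ X ∧ 0 ≤ h x ∧ h x ≤ r}), y ≤ Cb := by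
    intro r y hy
    rcases hy with rfl | ⟨x, hx, rfl⟩
    · exact hCb0
    · exact hMle x hx.1
  have hbdd : ∀ r : ℝ, BddAbove (insert 0 (M '' {x | x ∈ X ∧ 0 ≤ h x ∧ h x ≤ r})) :=
    fun r => ⟨Cb, fun y hy => hSle r y hy⟩
  have hφle : ∀ r, φ r ≤ Cb := fun r =>
    csSup_le (insert_nonempty _ _) (hSle r)
  have hφ0le : ∀ r, 0 ≤ φ r := fun r => le_csSup (hbdd r) (mem_insert _ _)
  have hφmono : Monotone φ := by
    intro r s hrs
    refine csSup_le_csSup (hbdd s) (insert_nonempty _ _) ?_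
    refine insert_subset_insert (image_mono ?_)
    intro x hx
    exact ⟨hx.1, hx.2.1, hx.2.2.trans hrs⟩
  have hφge : ∀ x ∈ X, 0 ≤ h x → M x ≤ φ (h x) := by
    intro x hx h0
    exact le_csSup (hbdd (h x)) (mem_insert_of_mem _ (mem_image_of_mem M ⟨hx, h0, le_rfl⟩))
  have hMboundary : ∀ x ∈ X, h x = 0 → M x ≤ 0 := by
    intro x hx hx0
    obtain ⟨u, hu, hψu⟩ := hbd x hx hx0
    obtain ⟨-, -, -, hlb⟩ := hMattain x
    have := hlb u hu
    linarith
  have hφ0 : φ 0 = 0 := by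
    refine le_antisymm (csSup_le (insert_nonempty _ _) ?_) (hφ0le 0)
    intro y hy
    rcases hy with rfl | ⟨x, hx, rfl⟩
    · exact le_rfl
    · exact hMboundary x hx.1 (le_antisymm hx.2.2 hx.2.1)
  -- the key compactness estimate
  have hsmall : ∀ ε : ℝ, 0 < ε → ∃ η : ℝ, 0 < η ∧ ∀ s : ℝ, s ≤ η → φ s ≤ ε := by
    intro ε hε
    set K : Set (EuclideanSpace ℝ (Fin n)) :=
      {x | x ∈ X ∧ 0 ≤ h x ∧ ∀ u ∈ U, ψ (x, u) ≤ -ε} with hKdef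
    have hKclosed : IsClosed K := by
      have : K = (X ∩ h ⁻¹' Ici 0) ∩ ⋂ u ∈ U, {x | ψ (x, u) ≤ -ε} := by
        ext x
        simp only [hKdef, mem_setOf_eq, mem_inter_iff, mem_preimage, mem_Ici, mem_iInter]
        tauto
      rw [this]
      exact ((hX.isClosed.inter (isClosed_Ici.preimage hh)).inter
        (isClosed_biInter fun u _ => isClosed_le (hcontu u) continuous_const))
    have hKcompact : IsCompact K := hX.of_isClosed_subset hKclosed fun x hx => hx.1
    have hnotK : ∀ x ∈ X, 0 ≤ h x → x ∉ K → M x ≤ ε := by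
      intro x hx h0 hxK
      have : ¬ ∀ u ∈ U, ψ (x, u) ≤ -ε := fun hc => hxK ⟨hx, h0, hc⟩
      push_neg at this
      obtain ⟨u, hu, hψu⟩ := this
      obtain ⟨-, -, -, hlb⟩ := hMattain x
      have := hlb u hu
      linarith
    rcases K.eq_empty_or_nonempty with hKe | hKne
    · refine ⟨1, one_pos, ?_⟩
      intro s _
      refine csSup_le (insert_nonempty _ _) ?_
      intro y hy
      rcases hy with rfl | ⟨x, hx, rfl⟩
      · exact hε.le
      · exact hnotK x hx.1 hx.2.1 (by simp [hKe])
    · obtain ⟨z, hzK, hzmin⟩ := hKcompact.exists_isMinOn hKne hh.continuousOn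
      have hz0 : 0 < h z := by
        rcases lt_or_eq_of_le hzK.2.1 with hlt | heq
        · exact hlt
        · exfalso
          obtain ⟨u, hu, hψu⟩ := hbd z hzK.1 heq.symm
          have := hzK.2.2 u hu
          linarith
      refine ⟨h z / 2, by linarith, ?_⟩
      intro s hs
      refine csSup_le (insert_nonempty _ _) ?_
      intro y hy
      rcases hy with rfl | ⟨x, hx, rfl⟩
      · exact hε.le
      · refine hnotK x hx.1 hx.2.1 ?_
        intro hxK
        have := hzmin hxK
        have : h z ≤ h x := this
        have := hx.2.2
        linarith
  -- φ r = 0 for r < 0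
  have hφneg : ∀ r : ℝ, r < 0 → φ r = 0 := by
    intro r hr
    have hempty : {x | x ∈ X ∧ 0 ≤ h x ∧ h x ≤ r} = ∅ := by
      ext x
      simp only [mem_setOf_eq, mem_empty_iff_false, iff_false, not_and]
      intro _ h0 hle
      linarith
    show sSup (insert 0 (M '' {x | x ∈ X ∧ 0 ≤ h x ∧ h x ≤ r})) = 0
    rw [hempty, image_empty, insert_empty_eq, csSup_singleton]
  -- φ tends to 0 at 0, hence continuous at 0
  have hφtend : Filter.Tendsto φ (nhds 0) (nhds 0) := by
    rw [Metric.tendsto_nhds_nhds]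
    intro ε hε
    obtain ⟨η, hη, hηle⟩ := hsmall (ε / 2) (by linarith)
    refine ⟨η, hη, ?_⟩
    intro s hs
    rw [Real.dist_eq, sub_zero] at hs ⊢
    have hsη : s ≤ η := le_of_lt (lt_of_le_of_lt (le_abs_self s) hs)
    have h1 := hηle s hsη
    have h2 := hφ0le s
    rw [abs_of_nonneg h2]
    linarith
  have hφcont0 : ContinuousAt φ 0 := by
    unfold ContinuousAt
    rw [hφ0]
    exact hφtend
  have hφmeas : Measurable φ := hφmono.measurable
  -- integrability of t ↦ φ (r * t)
  have hint : ∀ r : ℝ, IntervalIntegrable (fun t => φ (r * t)) volume 1 2 := by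
    intro r
    rcases le_or_gt 0 r with hr | hr
    · have hm : Monotone fun t => φ (r * t) :=
        fun a b hab => hφmono (mul_le_mul_of_nonneg_left hab hr)
      exact hm.intervalIntegrable
    · have hm : Antitone fun t => φ (r * t) :=
        fun a b hab => hφmono (mul_le_mul_of_nonpos_left hab hr.le)
      exact hm.intervalIntegrable
  -- the candidate class-K_e function
  set γ : ℝ → ℝ := fun r => r + ∫ t in (1:ℝ)..2, φ (r * t) with hγdef
  have hJmono : ∀ r s : ℝ, r ≤ s →
      (∫ t in (1:ℝ)..2, φ (r * t)) ≤ ∫ t in (1:ℝ)..2, φ (s * t) := by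
    intro r s hrs
    refine intervalIntegral.integral_mono_on (by norm_num) (hint r) (hint s) ?_
    intro t ht
    exact hφmono (mul_le_mul_of_nonneg_right hrs (by linarith [ht.1]))
  have hJge : ∀ r : ℝ, 0 ≤ r → φ r ≤ ∫ t in (1:ℝ)..2, φ (r * t) := by
    intro r hr
    have heq : (∫ t in (1:ℝ)..2, φ r) = φ r := by
      rw [intervalIntegral.integral_const]
      norm_num
    rw [← heq]
    refine intervalIntegral.integral_mono_on (by norm_num) (by simp) (hint r) ?_
    intro t ht
    exact hφmono (le_mul_of_one_le_right hr ht.1)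
  have hγ0 : γ 0 = 0 := by
    simp [hγdef, hφ0]
  have hγsm : StrictMono γ := by
    intro r s hrs
    exact add_lt_add_of_lt_of_le hrs (hJmono r s hrs.le)
  have hγcont : Continuous γ := by
    refine continuous_id.add ?_
    rw [continuous_iff_continuousAt]
    intro r₀
    refine intervalIntegral.continuousAt_of_dominated_interval
      (Filter.Eventually.of_forall fun r =>
        (hφmeas.comp (measurable_id.const_mul r)).aestronglyMeasurable)
      (Filter.Eventually.of_forall fun r => Filter.Eventually.of_forall fun t _ => ?_)
      (intervalIntegrable_const (c := Cb)) ?_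
    · rw [Real.norm_eq_abs, abs_of_nonneg (hφ0le _)]
      exact hφle _
    · by_cases hr₀ : r₀ = 0
      · refine Filter.Eventually.of_forall fun t _ => ?_
        have hc : ContinuousAt (fun r : ℝ => r * t) r₀ :=
          (continuous_id.mul continuous_const).continuousAt
        have hφc : ContinuousAt φ (r₀ * t) := by
          rw [hr₀, zero_mul]
          exact hφcont0
        exact ContinuousAt.comp (f := fun r : ℝ => r * t) (x := r₀) hφc hc
      · have hD : {s : ℝ | ¬ ContinuousAt φ s}.Countable :=
          hφmono.countable_not_continuousAt
        have hT : ((fun t : ℝ => r₀ * t) ⁻¹' {s : ℝ | ¬ ContinuousAt φ s}).Countable :=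
          hD.preimage (mul_right_injective₀ hr₀)
        filter_upwards [hT.ae_notMem volume] with t ht _
        have hc : ContinuousAt (fun r : ℝ => r * t) r₀ :=
          (continuous_id.mul continuous_const).continuousAt
        simp only [mem_preimage, mem_setOf_eq, not_not] at ht
        exact ContinuousAt.comp (f := fun r : ℝ => r * t) (x := r₀) ht hc
  refine ⟨γ, ⟨hγcont, hγsm, hγ0⟩, ?_⟩
  intro x hx hhx
  obtain ⟨u, hu, hMx, -⟩ := hMattain x
  refine ⟨u, hu, le_trans (hcal x hx u hu) (measure_mono ?_)⟩
  intro ω hω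
  have hkey : -γ (h x) ≤ ψ (x, u) := by
    have h1 : M x ≤ φ (h x) := hφge x hx hhx
    have h2 : φ (h x) ≤ ∫ t in (1:ℝ)..2, φ (h x * t) := hJge (h x) hhx
    have h3 : M x ≤ γ (h x) := by
      have : φ (h x) ≤ γ (h x) := by
        simp only [hγdef]
        linarith
      linarith
    rw [hMx] at h3
    linarith
  exact le_trans hkey hω
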